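/- If v ∈ sp₂(H) is a normal operator and v = x + y is its decomposition into Hermitian part x and anti-Hermitian part y, then x commutes with y, and consequently e^{tv*} e^{t(v - v*)} = e^{tv} = e^{tx} e^{ty} for all t; i.e. geodesics of the left-invariant metric with normal initial speed are one-parameter groups. -/

import Mathlib

open scoped RealInnerProductSpace
open ContinuousLinearMap

noncomputable section

variable {ι H : Type*} [NormedAddCommGroup H] [InnerProductSpace ℝ H] [CompleteSpace H]

/-- `x` is a Hilbert-Schmidt operator (with respect to the Hilbert basis `b`). -/
def IsHS (b : HilbertBasis ι ℝ H) (x : H →L[ℝ] H) : Prop :=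
  Summable fun i => ‖x (b i)‖ ^ 2

/-- The Hilbert-Schmidt norm `‖x‖₂`. -/
def hsNorm (b : HilbertBasis ι ℝ H) (x : H →L[ℝ] H) : ℝ :=
  Real.sqrt (∑' i, ‖x (b i)‖ ^ 2)

/-- The trace inner product `⟨x, y⟩ = Tr (y* x)`. -/
def hsInner (b : HilbertBasis ι ℝ H) (x y : H →L[ℝ] H) : ℝ :=
  ∑' i, ⟪x (b i), y (b i)⟫

/-- `J` is a complex structure: `J² = -1` and `J* = -J`. -/
def IsCplxStruct (J : H →L[ℝ] H) : Prop :=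
  J * J = -1 ∧ star J = -J

/-- The symplectic group `Sp(H)`. -/
def Sp (J : H →L[ℝ] H) : Set (H →L[ℝ] H) :=
  {g | IsUnit g ∧ star g * J * g = J}

/-- The restricted symplectic group `Sp₂(H)`. -/
def Sp2 (b : HilbertBasis ι ℝ H) (J : H →L[ℝ] H) : Set (H →L[ℝ] H) :=
  {g | g ∈ Sp J ∧ IsHS b (g - 1)}

/-- The Banach-Lie algebra `sp₂(H) = {x ∈ B₂(H) : xJ = -Jx*}`. -/
def sp2 (b : HilbertBasis ι ℝ H) (J : H →L[ℝ] H) : Set (H →L[ℝ] H) :=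
  {x | IsHS b x ∧ x * J = -(J * star x)}

/-- The Hermitian part of `sp₂(H)`. -/
def sp2h (b : HilbertBasis ι ℝ H) (J : H →L[ℝ] H) : Set (H →L[ℝ] H) :=
  {x ∈ sp2 b J | IsSelfAdjoint x}

/-- The anti-Hermitian part of `sp₂(H)`. -/
def sp2ah (b : HilbertBasis ι ℝ H) (J : H →L[ℝ] H) : Set (H →L[ℝ] H) :=
  {x ∈ sp2 b J | star x = -x}

/-- The positive part `Sp₂⁺(H)` of the restricted symplectic group. -/
def Sp2pos (b : HilbertBasis ι ℝ H) (J : H →L[ℝ] H) : Set (H →L[ℝ] H) :=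
  {g ∈ Sp2 b J | g.IsPositive}

/-- The restricted unitary group `U₂(H_J)` of unitaries commuting with `J` which are
Hilbert-Schmidt perturbations of the identity. -/
def U2J (b : HilbertBasis ι ℝ H) (J : H →L[ℝ] H) : Set (H →L[ℝ] H) :=
  {u | star u * u = 1 ∧ u * star u = 1 ∧ u * J = J * u ∧ IsHS b (u - 1)}

open scoped Classical in
/-- The positive square root `a^{1/2}` of a positive operator (junk value otherwise). -/
def psqrt (a : H →L[ℝ] H) : H →L[ℝ] H :=
  if h : ∃ s : H →L[ℝ] H, s.IsPositive ∧ s * s = a then h.choose else 0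

/-- A piecewise smooth curve parametrized on `[0,1]`. -/
def PiecewiseSmooth (α : ℝ → (H →L[ℝ] H)) : Prop :=
  ContinuousOn α (Set.Icc 0 1) ∧ ∃ n : ℕ, ∃ t : Fin (n + 1) → ℝ,
    StrictMono t ∧ t 0 = 0 ∧ t (Fin.last n) = 1 ∧
    ∀ i : Fin n, ContDiffOn ℝ 1 α (Set.Icc (t i.castSucc) (t i.succ))

/-- Length of a curve with respect to a metric `F` on tangent vectors. -/
def lengthWith (F : (H →L[ℝ] H) → (H →L[ℝ] H) → ℝ) (α : ℝ → (H →L[ℝ] H)) : ℝ :=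
  ∫ t in (0:ℝ)..1, F (α t) (deriv α t)

/-- Piecewise smooth curves inside `S` joining `p` to `q`. -/
def pathsIn (S : Set (H →L[ℝ] H)) (p q : H →L[ℝ] H) : Set (ℝ → (H →L[ℝ] H)) :=
  {α | PiecewiseSmooth α ∧ (∀ t ∈ Set.Icc (0:ℝ) 1, α t ∈ S) ∧ α 0 = p ∧ α 1 = q}

/-- The geodesic distance in `S` associated to the metric `F`. -/
def gdist (S : Set (H →L[ℝ] H)) (F : (H →L[ℝ] H) → (H →L[ℝ] H) → ℝ)
    (p q : H →L[ℝ] H) : ℝ :=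
  sInf (lengthWith F '' pathsIn S p q)

/-- The left invariant metric `I(g,v) = ‖g⁻¹ v‖₂`. -/
def leftMet (b : HilbertBasis ι ℝ H) : (H →L[ℝ] H) → (H →L[ℝ] H) → ℝ :=
  fun g v => hsNorm b (Ring.inverse g * v)

/-- The metric of positive operators `𝔭(a,x) = ‖a^{-1/2} x a^{-1/2}‖₂`. -/
def posMet (b : HilbertBasis ι ℝ H) : (H →L[ℝ] H) → (H →L[ℝ] H) → ℝ :=
  fun a x => hsNorm b (Ring.inverse (psqrt a) * x * Ring.inverse (psqrt a))

/-- The ambient metric `𝔭_amb(g,x) = ‖x‖₂`. -/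
def ambMet (b : HilbertBasis ι ℝ H) : (H →L[ℝ] H) → (H →L[ℝ] H) → ℝ :=
  fun _ x => hsNorm b x


set_option maxHeartbeats 2000000 in
set_option synthInstance.maxHeartbeats 400000 in
/-- for normal `v ∈ sp₂(H)` the Hermitian and anti-Hermitian parts
commute, and the geodesics with normal initial speed are one-parameter groups. -/
theorem normal_speed_one_parameter_group (b : HilbertBasis ι ℝ H) (J : H →L[ℝ] H)
    (hJ : IsCplxStruct J) (v : H →L[ℝ] H) (hv : v ∈ sp2 b J)
    (hnormal : v * star v = star v * v)
    (x y : H →L[ℝ] H)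
    (hx : x = (1/2 : ℝ) • (v + star v)) (hy : y = (1/2 : ℝ) • (v - star v)) :
    x * y = y * x ∧ ∀ t : ℝ,
      NormedSpace.exp (t • star v) * NormedSpace.exp (t • (v - star v)) =
        NormedSpace.exp (t • v) ∧
      NormedSpace.exp (t • v) = NormedSpace.exp (t • x) * NormedSpace.exp (t • y) := by
  have hcomm : Commute v (star v) := hnormal
  have h2 : Commute (v + star v) (v - star v) :=
    ((Commute.refl v).add_left hcomm.symm).sub_right (hcomm.add_left (Commute.refl _))
  have hxy : x * y = y * x := by
    subst hx hy
    exact (h2.smul_left _).smul_right _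
  refine ⟨hxy, fun t => ?_⟩
  have h1 : Commute (star v) (v - star v) := hcomm.symm.sub_right (Commute.refl _)
  have e1 : NormedSpace.exp (t • star v) * NormedSpace.exp (t • (v - star v)) =
      NormedSpace.exp (t • v) := by
    rw [← NormedSpace.exp_add_of_commute_of_mem_ball (𝕂 := ℝ) ((h1.smul_left t).smul_right t) ((NormedSpace.expSeries_radius_eq_top ℝ (H →L[ℝ] H)).symm ▸ edist_lt_top _ _) ((NormedSpace.expSeries_radius_eq_top ℝ (H →L[ℝ] H)).symm ▸ edist_lt_top _ _), ← smul_add]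
    congr 1
    module
  refine ⟨e1, ?_⟩
  have e2 : NormedSpace.exp (t • x) * NormedSpace.exp (t • y) =
      NormedSpace.exp (t • v) := by
    rw [← NormedSpace.exp_add_of_commute_of_mem_ball (𝕂 := ℝ) ((Commute.smul_left hxy t).smul_right t) ((NormedSpace.expSeries_radius_eq_top ℝ (H →L[ℝ] H)).symm ▸ edist_lt_top _ _) ((NormedSpace.expSeries_radius_eq_top ℝ (H →L[ℝ] H)).symm ▸ edist_lt_top _ _), ← smul_add]
    congr 1
    rw [hx, hy]
    module
  exact e2.symm

end
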